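/- Let Λ₁, Λ₂ be compatible channels with joint channel Λ : S(H) → S(H₁ ⊗ H₂), let J₁ = {Φ'¹_x : L(H₁) → L(K₁)} and J₂ = {Φ'²_y : L(H₂) → L(K₂)} be arbitrary instruments with total channels Γ₁ = Σ_x Φ'¹_x and Γ₂ = Σ_y Φ'²_y. Then the instruments I₁ = {Φ'¹_x ∘ Λ₁} and I₂ = {Φ'²_y ∘ Λ₂} are parallelly compatible, with joint instrument I = {(Φ'¹_x ⊗ Φ'²_y) ∘ Λ}. -/

import Mathlib

open Matrix BigOperators ComplexOrder

noncomputable section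

/-- Partial trace over the second tensor factor. -/
def ptraceRight {A B : Type*} [Fintype B] (M : Matrix (A × B) (A × B) ℂ) :
    Matrix A A ℂ := fun i j => ∑ k, M (i, k) (j, k)

/-- Partial trace over the first tensor factor. -/
def ptraceLeft {A B : Type*} [Fintype A] (M : Matrix (A × B) (A × B) ℂ) :
    Matrix B B ℂ := fun i j => ∑ k, M (k, i) (k, j)

/-- Complete positivity, via existence of a Kraus decomposition (Choi's theorem). -/
def IsCP {H K : Type*} [Fintype H] [Fintype K]
    (Φ : Matrix H H ℂ →ₗ[ℂ] Matrix K K ℂ) : Prop :=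
  ∃ (m : ℕ) (Ks : Fin m → Matrix K H ℂ), ∀ ρ, Φ ρ = ∑ i, Ks i * ρ * (Ks i)ᴴ

def IsTP {H K : Type*} [Fintype H] [Fintype K]
    (Φ : Matrix H H ℂ →ₗ[ℂ] Matrix K K ℂ) : Prop :=
  ∀ ρ, (Φ ρ).trace = ρ.trace

/-- A quantum channel is a CPTP map. -/
def IsChannel {H K : Type*} [Fintype H] [Fintype K]
    (Φ : Matrix H H ℂ →ₗ[ℂ] Matrix K K ℂ) : Prop := IsCP Φ ∧ IsTP Φ

/-- A quantum instrument: a finite family of CP maps summing to a CPTP map. -/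
def IsInstrument {ι H K : Type*} [Fintype ι] [Fintype H] [Fintype K]
    (Φ : ι → (Matrix H H ℂ →ₗ[ℂ] Matrix K K ℂ)) : Prop :=
  (∀ x, IsCP (Φ x)) ∧ IsTP (∑ x, Φ x)

def IsDensity {H : Type*} [Fintype H] (ρ : Matrix H H ℂ) : Prop :=
  ρ.PosSemidef ∧ ρ.trace = 1

def IsPOVM {ι H : Type*} [Fintype ι] [Fintype H] [DecidableEq H]
    (A : ι → Matrix H H ℂ) : Prop :=
  (∀ x, (A x).PosSemidef) ∧ (∑ x, A x) = 1

/-- `Φd` is the Heisenberg dual of `Φ`. -/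
def IsDual {H K : Type*} [Fintype H] [Fintype K]
    (Φ : Matrix H H ℂ →ₗ[ℂ] Matrix K K ℂ)
    (Φd : Matrix K K ℂ →ₗ[ℂ] Matrix H H ℂ) : Prop :=
  ∀ ρ X, ((Φ ρ) * X).trace = (ρ * Φd X).trace

/-- The instrument `I` measures the observable `A`. -/
def ACompatible {ι H K : Type*} [Fintype ι] [Fintype H] [Fintype K]
    (A : ι → Matrix H H ℂ) (I : ι → (Matrix H H ℂ →ₗ[ℂ] Matrix K K ℂ)) : Prop :=
  ∀ ρ, IsDensity ρ → ∀ x, (I x ρ).trace = (ρ * A x).trace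

/-- Observable-observable compatibility: existence of a joint POVM. -/
def ObsCompatible {ιx ιy H : Type*} [Fintype ιx] [Fintype ιy] [Fintype H] [DecidableEq H]
    (A : ιx → Matrix H H ℂ) (B : ιy → Matrix H H ℂ) : Prop :=
  ∃ G : ιx × ιy → Matrix H H ℂ, IsPOVM G ∧
    (∀ x, ∑ y, G (x, y) = A x) ∧ (∀ y, ∑ x, G (x, y) = B y)

/-- Channel-channel compatibility: existence of a joint channel. -/
def ChannelsCompatible {H K₁ K₂ : Type*} [Fintype H] [Fintype K₁] [Fintype K₂]
    (Λ₁ : Matrix H H ℂ →ₗ[ℂ] Matrix K₁ K₁ ℂ)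
    (Λ₂ : Matrix H H ℂ →ₗ[ℂ] Matrix K₂ K₂ ℂ) : Prop :=
  ∃ Λ : Matrix H H ℂ →ₗ[ℂ] Matrix (K₁ × K₂) (K₁ × K₂) ℂ, IsChannel Λ ∧
    (∀ ρ, ptraceRight (Λ ρ) = Λ₁ ρ) ∧ (∀ ρ, ptraceLeft (Λ ρ) = Λ₂ ρ)

/-- Observable-channel compatibility. -/
def ObsChannelCompatible {ι H K : Type*} [Fintype ι] [Fintype H] [Fintype K]
    (A : ι → Matrix H H ℂ) (Λ : Matrix H H ℂ →ₗ[ℂ] Matrix K K ℂ) : Prop :=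
  ∃ I : ι → (Matrix H H ℂ →ₗ[ℂ] Matrix K K ℂ),
    IsInstrument I ∧ ACompatible A I ∧ (∑ x, I x) = Λ

/-- Traditional compatibility of two instruments with the same output space. -/
def TraditionallyCompatible {ιx ιy H K : Type*} [Fintype ιx] [Fintype ιy] [Fintype H] [Fintype K]
    (I₁ : ιx → (Matrix H H ℂ →ₗ[ℂ] Matrix K K ℂ))
    (I₂ : ιy → (Matrix H H ℂ →ₗ[ℂ] Matrix K K ℂ)) : Prop :=
  ∃ Φ : ιx × ιy → (Matrix H H ℂ →ₗ[ℂ] Matrix K K ℂ), IsInstrument Φ ∧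
    (∀ x, ∑ y, Φ (x, y) = I₁ x) ∧ (∀ y, ∑ x, Φ (x, y) = I₂ y)

/-- Parallel compatibility of two instruments. -/
def ParallelCompatible {ιx ιy H K₁ K₂ : Type*} [Fintype ιx] [Fintype ιy]
    [Fintype H] [Fintype K₁] [Fintype K₂]
    (I₁ : ιx → (Matrix H H ℂ →ₗ[ℂ] Matrix K₁ K₁ ℂ))
    (I₂ : ιy → (Matrix H H ℂ →ₗ[ℂ] Matrix K₂ K₂ ℂ)) : Prop :=
  ∃ Φ : ιx × ιy → (Matrix H H ℂ →ₗ[ℂ] Matrix (K₁ × K₂) (K₁ × K₂) ℂ), IsInstrument Φ ∧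
    (∀ x ρ, ∑ y, ptraceRight (Φ (x, y) ρ) = I₁ x ρ) ∧
    (∀ y ρ, ∑ x, ptraceLeft (Φ (x, y) ρ) = I₂ y ρ)

/-- Tensor product of two maps on matrix algebras. -/
def tensorMap {A B C D : Type*} [Fintype A] [Fintype B] [Fintype C] [Fintype D]
    [DecidableEq A] [DecidableEq B]
    (Φ : Matrix A A ℂ →ₗ[ℂ] Matrix C C ℂ) (Ψ : Matrix B B ℂ →ₗ[ℂ] Matrix D D ℂ) :
    Matrix (A × B) (A × B) ℂ →ₗ[ℂ] Matrix (C × D) (C × D) ℂ where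
  toFun M := fun p q => ∑ a, ∑ a', ∑ b, ∑ b',
    M (a, b) (a', b') * (Φ (Matrix.single a a' 1)) p.1 q.1
      * (Ψ (Matrix.single b b' 1)) p.2 q.2
  map_add' M N := by
    funext p q
    simp [Matrix.add_apply, add_mul, Finset.sum_add_distrib]
    rfl
  map_smul' c M := by
    funext p q
    simp [Matrix.smul_apply, Finset.mul_sum, mul_assoc]
    simp only [← Finset.mul_sum]
    rfl

open Kronecker

section AuxLemmas

variable {A B C D P A' B' : Type*}

/-- swap an outer sum past four inner sums -/
lemma sum_swap5 {β : Type*} [AddCommMonoid β] [Fintype P] [Fintype A] [Fintype A']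
    [Fintype B] [Fintype B'] (f : P → A → A' → B → B' → β) :
    ∑ p, ∑ a, ∑ a', ∑ b, ∑ b', f p a a' b b'
      = ∑ a, ∑ a', ∑ b, ∑ b', ∑ p, f p a a' b b' := by
  rw [Finset.sum_comm]
  refine Finset.sum_congr rfl fun a _ => ?_
  rw [Finset.sum_comm]
  refine Finset.sum_congr rfl fun a' _ => ?_
  rw [Finset.sum_comm]
  refine Finset.sum_congr rfl fun b _ => Finset.sum_comm

lemma kron_conjTranspose [Fintype A] [Fintype B] [Fintype C] [Fintype D]
    (K : Matrix C A ℂ) (L : Matrix D B ℂ) : (K ⊗ₖ L)ᴴ = Kᴴ ⊗ₖ Lᴴ := by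
  ext ⟨a, b⟩ ⟨c, d⟩
  simp [Matrix.conjTranspose_apply, Matrix.kroneckerMap_apply, star_mul']

lemma std_kron [Fintype A] [Fintype B] [DecidableEq A] [DecidableEq B]
    (a a' : A) (b b' : B) :
    Matrix.single a a' (1:ℂ) ⊗ₖ Matrix.single b b' (1:ℂ)
      = Matrix.single (a, b) (a', b') 1 := by
  ext ⟨i, j⟩ ⟨k, l⟩
  simp [Matrix.single, Matrix.kroneckerMap_apply, Prod.ext_iff, ite_and]
  aesop

lemma trace_std [Fintype B] [DecidableEq B] (b b' : B) :
    (Matrix.single b b' (1:ℂ)).trace = if b = b' then 1 else 0 := by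
  simp only [Matrix.trace, Matrix.diag, Matrix.single, Matrix.of_apply, ite_and]
  simp [Finset.sum_ite_eq, eq_comm]

lemma sum_kron [Fintype A] [Fintype B] [Fintype C] [Fintype D] {ι : Type*} (s : Finset ι)
    (f : ι → Matrix A B ℂ) (N : Matrix C D ℂ) :
    (∑ i ∈ s, f i) ⊗ₖ N = ∑ i ∈ s, f i ⊗ₖ N := by
  ext ⟨a, b⟩ ⟨c, d⟩
  simp [Matrix.kroneckerMap_apply, Matrix.sum_apply, Finset.sum_mul]

lemma kron_sum [Fintype A] [Fintype B] [Fintype C] [Fintype D] {ι : Type*} (s : Finset ι)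
    (N : Matrix A B ℂ) (f : ι → Matrix C D ℂ) :
    N ⊗ₖ (∑ i ∈ s, f i) = ∑ i ∈ s, N ⊗ₖ f i := by
  ext ⟨a, b⟩ ⟨c, d⟩
  simp [Matrix.kroneckerMap_apply, Matrix.sum_apply, Finset.mul_sum]

/-- expansion of a linear map over the standard basis -/
lemma map_eq_sum_std [Fintype A] [DecidableEq A] [Fintype C]
    (Φ : Matrix A A ℂ →ₗ[ℂ] Matrix C C ℂ) (N : Matrix A A ℂ) :
    Φ N = ∑ a, ∑ a', N a a' • Φ (Matrix.single a a' 1) := by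
  have h : ∀ (i j : A), Matrix.single i j (N i j)
      = N i j • Matrix.single i j (1:ℂ) := fun i j => by
    rw [Matrix.smul_single, smul_eq_mul, mul_one]
  conv_lhs => rw [Matrix.matrix_eq_sum_single N]
  rw [map_sum]
  refine Finset.sum_congr rfl fun a _ => ?_
  rw [map_sum]
  refine Finset.sum_congr rfl fun a' _ => ?_
  rw [h, LinearMap.map_smul]

/-- reconstruction of a matrix on a product space -/
lemma matrix_eq_sum_kron [Fintype A] [Fintype B] [DecidableEq A] [DecidableEq B]
    (M : Matrix (A × B) (A × B) ℂ) :
    ∑ a, ∑ a', ∑ b, ∑ b', M (a, b) (a', b') •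
        (Matrix.single a a' (1:ℂ) ⊗ₖ Matrix.single b b' (1:ℂ)) = M := by
  have h : ∀ (a : A) (a' : A) (b : B) (b' : B),
      M (a, b) (a', b') • (Matrix.single a a' (1:ℂ) ⊗ₖ Matrix.single b b' (1:ℂ))
        = Matrix.single ((a, b) : A × B) (a', b') (M (a, b) (a', b')) := by
    intro a a' b b'
    rw [std_kron, Matrix.smul_single, smul_eq_mul, mul_one]
  simp_rw [h]
  conv_rhs => rw [Matrix.matrix_eq_sum_single M]
  rw [Fintype.sum_prod_type]
  refine Finset.sum_congr rfl fun a _ => ?_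
  rw [Finset.sum_comm]
  refine Finset.sum_congr rfl fun a' _ => ?_
  rw [Fintype.sum_prod_type]

/-- tensorMap written with kronecker products -/
lemma tensorMap_eq_sum [Fintype A] [Fintype B] [Fintype C] [Fintype D]
    [DecidableEq A] [DecidableEq B]
    (Φ : Matrix A A ℂ →ₗ[ℂ] Matrix C C ℂ) (Ψ : Matrix B B ℂ →ₗ[ℂ] Matrix D D ℂ)
    (M : Matrix (A × B) (A × B) ℂ) :
    tensorMap Φ Ψ M = ∑ a, ∑ a', ∑ b, ∑ b', M (a, b) (a', b') •
        (Φ (Matrix.single a a' 1) ⊗ₖ Ψ (Matrix.single b b' 1)) := by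
  ext p q
  simp [tensorMap, Matrix.sum_apply, Matrix.kroneckerMap_apply, mul_assoc]
  rfl

lemma isCP_of_kraus {H K : Type*} [Fintype H] [Fintype K] {ι : Type*} [Fintype ι]
    {Φ : Matrix H H ℂ →ₗ[ℂ] Matrix K K ℂ} (Ks : ι → Matrix K H ℂ)
    (h : ∀ ρ, Φ ρ = ∑ i, Ks i * ρ * (Ks i)ᴴ) : IsCP Φ := by
  classical
  refine ⟨Fintype.card ι, Ks ∘ (Fintype.equivFin ι).symm, fun ρ => ?_⟩
  rw [h]
  exact Fintype.sum_equiv (Fintype.equivFin ι) _ _ (fun i => by simp)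

lemma isCP_comp {H K L : Type*} [Fintype H] [Fintype K] [Fintype L]
    {Φ : Matrix K K ℂ →ₗ[ℂ] Matrix L L ℂ} {Λ : Matrix H H ℂ →ₗ[ℂ] Matrix K K ℂ}
    (hΦ : IsCP Φ) (hΛ : IsCP Λ) : IsCP (Φ ∘ₗ Λ) := by
  obtain ⟨m, Ks, hK⟩ := hΦ
  obtain ⟨n, Ls, hL⟩ := hΛ
  refine isCP_of_kraus (ι := Fin m × Fin n) (fun p => Ks p.1 * Ls p.2) fun ρ => ?_
  rw [LinearMap.comp_apply, hK, hL]
  rw [Fintype.sum_prod_type]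
  refine Finset.sum_congr rfl fun i _ => ?_
  rw [Matrix.mul_sum, Matrix.sum_mul]
  refine Finset.sum_congr rfl fun j _ => ?_
  rw [Matrix.conjTranspose_mul]
  simp only [Matrix.mul_assoc]

lemma isCP_tensorMap {A B C D : Type*} [Fintype A] [Fintype B] [Fintype C] [Fintype D]
    [DecidableEq A] [DecidableEq B]
    {Φ : Matrix A A ℂ →ₗ[ℂ] Matrix C C ℂ} {Ψ : Matrix B B ℂ →ₗ[ℂ] Matrix D D ℂ}
    (hΦ : IsCP Φ) (hΨ : IsCP Ψ) : IsCP (tensorMap Φ Ψ) := by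
  obtain ⟨m, Ks, hK⟩ := hΦ
  obtain ⟨n, Ls, hL⟩ := hΨ
  refine isCP_of_kraus (ι := Fin m × Fin n) (fun p => Ks p.1 ⊗ₖ Ls p.2) fun M => ?_
  rw [tensorMap_eq_sum]
  have key : ∀ (a a' : A) (b b' : B),
      Φ (Matrix.single a a' 1) ⊗ₖ Ψ (Matrix.single b b' 1)
        = ∑ p : Fin m × Fin n, (Ks p.1 ⊗ₖ Ls p.2) *
            (Matrix.single a a' (1:ℂ) ⊗ₖ Matrix.single b b' (1:ℂ)) *
            (Ks p.1 ⊗ₖ Ls p.2)ᴴ := by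
    intro a a' b b'
    rw [hK, hL, sum_kron, Fintype.sum_prod_type]
    refine Finset.sum_congr rfl fun i _ => ?_
    rw [kron_sum]
    refine Finset.sum_congr rfl fun j _ => ?_
    rw [kron_conjTranspose, Matrix.mul_kronecker_mul, Matrix.mul_kronecker_mul]
  simp_rw [key, Finset.smul_sum]
  rw [← sum_swap5 (f := fun (p : Fin m × Fin n) a a' b b' => M (a,b) (a',b') •
      ((Ks p.1 ⊗ₖ Ls p.2) * (Matrix.single a a' (1:ℂ) ⊗ₖ Matrix.single b b' (1:ℂ)) * (Ks p.1 ⊗ₖ Ls p.2)ᴴ))]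
  refine Finset.sum_congr rfl fun p _ => ?_
  conv_rhs => rw [← matrix_eq_sum_kron M]
  simp_rw [Matrix.mul_sum, Matrix.sum_mul, Matrix.mul_smul, Matrix.smul_mul]

lemma tensorMap_apply {A B C D : Type*} [Fintype A] [Fintype B] [Fintype C] [Fintype D]
    [DecidableEq A] [DecidableEq B]
    (Φ : Matrix A A ℂ →ₗ[ℂ] Matrix C C ℂ) (Ψ : Matrix B B ℂ →ₗ[ℂ] Matrix D D ℂ)
    (M : Matrix (A × B) (A × B) ℂ) (p q : C × D) :
    tensorMap Φ Ψ M p q = ∑ a, ∑ a', ∑ b, ∑ b', M (a, b) (a', b')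
      * Φ (Matrix.single a a' 1) p.1 q.1
      * Ψ (Matrix.single b b' 1) p.2 q.2 := rfl

lemma tensorMap_sum_right {A B C D ι : Type*} [Fintype A] [Fintype B] [Fintype C] [Fintype D]
    [DecidableEq A] [DecidableEq B] [Fintype ι]
    (Φ : Matrix A A ℂ →ₗ[ℂ] Matrix C C ℂ) (Ψ : ι → (Matrix B B ℂ →ₗ[ℂ] Matrix D D ℂ))
    (M : Matrix (A × B) (A × B) ℂ) :
    tensorMap Φ (∑ y, Ψ y) M = ∑ y, tensorMap Φ (Ψ y) M := by
  simp_rw [tensorMap_eq_sum, LinearMap.sum_apply, kron_sum, Finset.smul_sum]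
  rw [← sum_swap5]

lemma tensorMap_sum_left {A B C D ι : Type*} [Fintype A] [Fintype B] [Fintype C] [Fintype D]
    [DecidableEq A] [DecidableEq B] [Fintype ι]
    (Φ : ι → (Matrix A A ℂ →ₗ[ℂ] Matrix C C ℂ)) (Ψ : Matrix B B ℂ →ₗ[ℂ] Matrix D D ℂ)
    (M : Matrix (A × B) (A × B) ℂ) :
    tensorMap (∑ x, Φ x) Ψ M = ∑ x, tensorMap (Φ x) Ψ M := by
  simp_rw [tensorMap_eq_sum, LinearMap.sum_apply, sum_kron, Finset.smul_sum]
  rw [← sum_swap5]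

lemma ptraceRight_sum {A B ι : Type*} [Fintype A] [Fintype B] [Fintype ι]
    (N : ι → Matrix (A × B) (A × B) ℂ) :
    ptraceRight (∑ y, N y) = ∑ y, ptraceRight (N y) := by
  ext i j
  simp only [ptraceRight, Matrix.sum_apply]
  rw [Finset.sum_comm]

lemma ptraceLeft_sum {A B ι : Type*} [Fintype A] [Fintype B] [Fintype ι]
    (N : ι → Matrix (A × B) (A × B) ℂ) :
    ptraceLeft (∑ y, N y) = ∑ y, ptraceLeft (N y) := by
  ext i j
  simp only [ptraceLeft, Matrix.sum_apply]
  rw [Finset.sum_comm]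

lemma trace_ptraceRight {A B : Type*} [Fintype A] [Fintype B]
    (N : Matrix (A × B) (A × B) ℂ) : (ptraceRight N).trace = N.trace := by
  simp [ptraceRight, Matrix.trace, Matrix.diag, Fintype.sum_prod_type]

lemma ptraceRight_tensorMap {A B C D : Type*} [Fintype A] [Fintype B] [Fintype C] [Fintype D]
    [DecidableEq A] [DecidableEq B]
    (Φ : Matrix A A ℂ →ₗ[ℂ] Matrix C C ℂ) {Ψ : Matrix B B ℂ →ₗ[ℂ] Matrix D D ℂ}
    (hΨ : IsTP Ψ) (M : Matrix (A × B) (A × B) ℂ) :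
    ptraceRight (tensorMap Φ Ψ M) = Φ (ptraceRight M) := by
  have hb : ∀ b b' : B, ∑ k, Ψ (Matrix.single b b' 1) k k
      = if b = b' then 1 else 0 := by
    intro b b'
    have h1 : (Ψ (Matrix.single b b' 1)).trace
        = (Matrix.single b b' (1:ℂ)).trace := hΨ _
    rw [trace_std] at h1
    exact h1
  ext i j
  show ∑ k, tensorMap Φ Ψ M (i, k) (j, k) = _
  simp only [tensorMap_apply]
  rw [sum_swap5]
  simp_rw [← Finset.mul_sum, hb, mul_ite, mul_one, mul_zero, Finset.sum_ite_eq,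
    Finset.mem_univ, if_true]
  rw [map_eq_sum_std Φ (ptraceRight M)]
  simp only [Matrix.sum_apply, Matrix.smul_apply, smul_eq_mul]
  refine Finset.sum_congr rfl fun a _ => Finset.sum_congr rfl fun a' _ => ?_
  simp only [ptraceRight, Finset.sum_mul]

lemma sum4_collapse_left {A B B' : Type*} [Fintype A] [Fintype B] [Fintype B']
    [DecidableEq A] (f : A → A → B → B' → ℂ) :
    ∑ a, ∑ a', ∑ b, ∑ b', (if a = a' then f a a' b b' else 0)
      = ∑ a, ∑ b, ∑ b', f a a b b' := by
  refine Finset.sum_congr rfl fun a _ => ?_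
  rw [Finset.sum_comm]
  refine Finset.sum_congr rfl fun b _ => ?_
  rw [Finset.sum_comm]
  refine Finset.sum_congr rfl fun b' _ => ?_
  simp [Finset.sum_ite_eq]

lemma ptraceLeft_tensorMap {A B C D : Type*} [Fintype A] [Fintype B] [Fintype C] [Fintype D]
    [DecidableEq A] [DecidableEq B]
    {Φ : Matrix A A ℂ →ₗ[ℂ] Matrix C C ℂ} (Ψ : Matrix B B ℂ →ₗ[ℂ] Matrix D D ℂ)
    (hΦ : IsTP Φ) (M : Matrix (A × B) (A × B) ℂ) :
    ptraceLeft (tensorMap Φ Ψ M) = Ψ (ptraceLeft M) := by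
  have ha : ∀ a a' : A, ∑ k, Φ (Matrix.single a a' 1) k k
      = if a = a' then 1 else 0 := by
    intro a a'
    have h1 : (Φ (Matrix.single a a' 1)).trace
        = (Matrix.single a a' (1:ℂ)).trace := hΦ _
    rw [trace_std] at h1
    exact h1
  ext i j
  show ∑ k, tensorMap Φ Ψ M (k, i) (k, j) = _
  simp only [tensorMap_apply]
  rw [sum_swap5]
  -- inner term: ∑ k, M (a,b)(a',b') * Φ(E) k k * Ψ(E) i j
  have : ∀ (a a' : A) (b b' : B),
      ∑ k, M (a, b) (a', b') * Φ (Matrix.single a a' 1) k k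
        * Ψ (Matrix.single b b' 1) i j
      = M (a, b) (a', b') * (if a = a' then 1 else 0)
        * Ψ (Matrix.single b b' 1) i j := by
    intro a a' b b'
    rw [← Finset.sum_mul, ← Finset.mul_sum, ha]
  simp_rw [this, mul_ite, mul_one, mul_zero, ite_mul, zero_mul]
  rw [sum4_collapse_left]
  rw [map_eq_sum_std Ψ (ptraceLeft M)]
  simp only [Matrix.sum_apply, Matrix.smul_apply, smul_eq_mul]
  rw [Finset.sum_comm]
  refine Finset.sum_congr rfl fun b _ => ?_
  rw [Finset.sum_comm]
  refine Finset.sum_congr rfl fun b' _ => ?_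
  simp [ptraceLeft, Finset.sum_mul]

end AuxLemmas

/-- Given compatible channels `Λ₁, Λ₂` with joint channel `Λ` and arbitrary
instruments `J₁, J₂`, the instruments `I₁ = {Φ'¹_x ∘ Λ₁}` and `I₂ = {Φ'²_y ∘ Λ₂}` are
parallelly compatible, with joint instrument `{(Φ'¹_x ⊗ Φ'²_y) ∘ Λ}`. -/
theorem stmt_6 {H H₁ H₂ K₁ K₂ ιx ιy : Type*} [Fintype H] [DecidableEq H]
    [Fintype H₁] [DecidableEq H₁] [Fintype H₂] [DecidableEq H₂]
    [Fintype K₁] [DecidableEq K₁] [Fintype K₂] [DecidableEq K₂]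
    [Fintype ιx] [Fintype ιy]
    (Λ₁ : Matrix H H ℂ →ₗ[ℂ] Matrix H₁ H₁ ℂ) (hΛ₁ : IsChannel Λ₁)
    (Λ₂ : Matrix H H ℂ →ₗ[ℂ] Matrix H₂ H₂ ℂ) (hΛ₂ : IsChannel Λ₂)
    (Λ : Matrix H H ℂ →ₗ[ℂ] Matrix (H₁ × H₂) (H₁ × H₂) ℂ) (hΛ : IsChannel Λ)
    (hm₁ : ∀ ρ, ptraceRight (Λ ρ) = Λ₁ ρ) (hm₂ : ∀ ρ, ptraceLeft (Λ ρ) = Λ₂ ρ)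
    (J₁ : ιx → (Matrix H₁ H₁ ℂ →ₗ[ℂ] Matrix K₁ K₁ ℂ)) (hJ₁ : IsInstrument J₁)
    (J₂ : ιy → (Matrix H₂ H₂ ℂ →ₗ[ℂ] Matrix K₂ K₂ ℂ)) (hJ₂ : IsInstrument J₂) :
    IsInstrument (fun p : ιx × ιy => tensorMap (J₁ p.1) (J₂ p.2) ∘ₗ Λ) ∧
    (∀ x ρ, ∑ y, ptraceRight ((tensorMap (J₁ x) (J₂ y) ∘ₗ Λ) ρ) = (J₁ x ∘ₗ Λ₁) ρ) ∧
    (∀ y ρ, ∑ x, ptraceLeft ((tensorMap (J₁ x) (J₂ y) ∘ₗ Λ) ρ) = (J₂ y ∘ₗ Λ₂) ρ) ∧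
    ParallelCompatible (fun x => J₁ x ∘ₗ Λ₁) (fun y => J₂ y ∘ₗ Λ₂) := by
  have hTP1 : IsTP (∑ x, J₁ x) := hJ₁.2
  have hTP2 : IsTP (∑ y, J₂ y) := hJ₂.2
  have hmarg1 : ∀ x ρ, ∑ y, ptraceRight ((tensorMap (J₁ x) (J₂ y) ∘ₗ Λ) ρ)
      = (J₁ x ∘ₗ Λ₁) ρ := by
    intro x ρ
    simp only [LinearMap.comp_apply]
    rw [← ptraceRight_sum, ← tensorMap_sum_right, ptraceRight_tensorMap _ hTP2, hm₁]
  have hmarg2 : ∀ y ρ, ∑ x, ptraceLeft ((tensorMap (J₁ x) (J₂ y) ∘ₗ Λ) ρ)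
      = (J₂ y ∘ₗ Λ₂) ρ := by
    intro y ρ
    simp only [LinearMap.comp_apply]
    rw [← ptraceLeft_sum, ← tensorMap_sum_left, ptraceLeft_tensorMap _ hTP1, hm₂]
  have hinstr : IsInstrument (fun p : ιx × ιy => tensorMap (J₁ p.1) (J₂ p.2) ∘ₗ Λ) := by
    constructor
    · intro p
      exact isCP_comp (isCP_tensorMap (hJ₁.1 p.1) (hJ₂.1 p.2)) hΛ.1
    · intro ρ
      simp only [LinearMap.sum_apply, LinearMap.comp_apply]
      rw [Matrix.trace_sum, Fintype.sum_prod_type]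
      have hx : ∀ x, ∑ y, (tensorMap (J₁ x) (J₂ y) (Λ ρ)).trace
          = ((J₁ x) (ptraceRight (Λ ρ))).trace := by
        intro x
        rw [← Matrix.trace_sum, ← tensorMap_sum_right, ← trace_ptraceRight,
          ptraceRight_tensorMap _ hTP2]
      simp_rw [hx]
      rw [← Matrix.trace_sum, ← LinearMap.sum_apply, hTP1, trace_ptraceRight]
      exact hΛ.2 ρ
  exact ⟨hinstr, hmarg1, hmarg2,
    ⟨fun p => tensorMap (J₁ p.1) (J₂ p.2) ∘ₗ Λ, hinstr, hmarg1, hmarg2⟩⟩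

end
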